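/- Let p be a prime and let Sq = {x² : x ∈ ℚ_p, x ≠ 0} denote the set of nonzero squares of ℚ_p. Then { (u,v,w) ∈ ℚ_p³ : for all a, b, c ∈ Sq, u·a + v·b + w·c ∈ Sq } = { (t,0,0) : t ∈ Sq } ∪ { (0,t,0) : t ∈ Sq } ∪ { (0,0,t) : t ∈ Sq }. (This computes the dual of the triangle T_H, the set of points of the H-sphere with all three coordinates in H = squares: the dual consists exactly of the three coordinate forms.) -/

import Mathlib

open Padic
variable {p : ℕ} [Fact p.Prime]
def Sq (p : ℕ) [Fact p.Prime] (x : ℚ_[p]) : Prop := ∃ r : ℚ_[p], r ≠ 0 ∧ x = r ^ 2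

lemma hensel_sq {x : ℚ_[p]} (hx : ‖x‖ < ‖(4 : ℚ_[p])‖) : Sq p (1 + x) := by
  have h4 : ‖(4:ℚ_[p])‖ ≤ 1 := by
    have : ((4:ℤ):ℚ_[p]) = (4:ℚ_[p]) := by norm_num
    rw [← this]; exact Padic.norm_int_le_one 4
  have hx1 : ‖x‖ < 1 := lt_of_lt_of_le hx h4
  set X : ℤ_[p] := ⟨x, le_of_lt hx1⟩ with hX
  set F : Polynomial ℤ_[p] := Polynomial.X ^ 2 - Polynomial.C (1 + X) with hF
  have heval : F.eval 1 = -X := by simp [hF]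
  have hderiv : F.derivative.eval 1 = 2 := by
    simp [hF, Polynomial.derivative_pow]
  have hnorm : ‖F.eval 1‖ < ‖F.derivative.eval 1‖ ^ 2 := by
    rw [heval, hderiv, norm_neg]
    have hXx : ‖X‖ = ‖x‖ := rfl
    have h2 : ‖(2:ℤ_[p])‖^2 = ‖(4:ℚ_[p])‖ := by
      have c2 : ((2:ℤ_[p]):ℚ_[p]) = 2 := by norm_cast
      rw [PadicInt.norm_def, c2, ← norm_pow]
      norm_num
    rw [hXx, h2]; exact hx
  obtain ⟨z, hz, -⟩ := hensels_lemma hnorm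
  have hz2 : (z : ℚ_[p])^2 = 1 + x := by
    have h1 : (z:ℤ_[p])^2 - (1+X) = 0 := by
      have := hz; simp [hF] at this; linear_combination this
    have h2 := congrArg (fun t : ℤ_[p] => (t : ℚ_[p])) h1
    push_cast at h2
    linear_combination h2
  refine ⟨z, ?_, hz2.symm⟩
  intro h0
  rw [h0] at hz2
  have hne : ‖(1:ℚ_[p])‖ ≠ ‖x‖ := by simp [hx1.ne']
  have := Padic.add_eq_max_of_ne hne
  rw [← hz2] at this
  simp [hx1.le] at this

lemma one_sq' {p : ℕ} [Fact p.Prime] : Sq p (1:ℚ_[p]) := ⟨1, one_ne_zero, by ring⟩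

lemma sq_div' {x t : ℚ_[p]} (hx : Sq p x) (ht : Sq p t) : Sq p (x / t) := by
  obtain ⟨r, hr, rfl⟩ := hx; obtain ⟨s, hs, rfl⟩ := ht
  exact ⟨r/s, div_ne_zero hr hs, by rw [div_pow]⟩

lemma sq_of_shift {t d : ℚ_[p]} (ht : t ≠ 0)
    (h : ∀ a, Sq p a → Sq p (t * a + d)) : Sq p t := by
  have hp1 : ‖(p:ℚ_[p])‖ < 1 := Padic.norm_p_lt_one
  have hp0' : (0:ℝ) ≤ ‖(p:ℚ_[p])‖ := norm_nonneg _
  have h40 : (0:ℝ) < ‖(4:ℚ_[p])‖ := by apply norm_pos_iff.2; norm_num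
  have hden : (0:ℝ) < ‖d * t⁻¹‖ + 1 := by positivity
  obtain ⟨n, hn⟩ := exists_pow_lt_of_lt_one (div_pos h40 hden) hp1
  have hpn : ((p:ℚ_[p]))^n ≠ 0 :=
    pow_ne_zero _ (Nat.cast_ne_zero.2 (Fact.out (p := p.Prime)).ne_zero)
  set ε : ℚ_[p] := d * ((p:ℚ_[p])^n)^2 * t⁻¹ with hε
  have hεsmall : ‖ε‖ < ‖(4:ℚ_[p])‖ := by
    have h1 : ‖ε‖ = ‖d * t⁻¹‖ * (‖(p:ℚ_[p])‖^n)^2 := by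
      rw [hε, show d * ((p:ℚ_[p])^n)^2 * t⁻¹ = (d * t⁻¹) * ((p:ℚ_[p])^n)^2 by ring,
        norm_mul, norm_pow, norm_pow]
    have h2 : (‖(p:ℚ_[p])‖^n)^2 ≤ ‖(p:ℚ_[p])‖^n := by
      have := pow_le_one₀ hp0' hp1.le (n := n)
      nlinarith [pow_nonneg hp0' n]
    calc ‖ε‖ ≤ ‖d * t⁻¹‖ * ‖(p:ℚ_[p])‖^n := by rw [h1]; gcongr
      _ ≤ (‖d * t⁻¹‖ + 1) * ‖(p:ℚ_[p])‖^n := by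
          have := pow_nonneg hp0' n; nlinarith
      _ < (‖d * t⁻¹‖ + 1) * (‖(4:ℚ_[p])‖ / (‖d * t⁻¹‖ + 1)) := by
          exact mul_lt_mul_of_pos_left hn hden
      _ = ‖(4:ℚ_[p])‖ := by field_simp
  obtain ⟨z, hz, hz2⟩ := hensel_sq hεsmall
  obtain ⟨s, hs, hs2⟩ := h ((((p:ℚ_[p])^n)⁻¹)^2) ⟨((p:ℚ_[p])^n)⁻¹, inv_ne_zero hpn, rfl⟩
  have hq : (((p:ℚ_[p])^n)⁻¹)^2 * ((p:ℚ_[p])^n)^2 = 1 := by field_simp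
  have hti : t⁻¹ * t = 1 := inv_mul_cancel₀ ht
  have E1 : t + d * ((p:ℚ_[p])^n)^2 = s^2 * ((p:ℚ_[p])^n)^2 := by
    linear_combination ((p:ℚ_[p])^n)^2 * hs2 - t * hq
  have E2 : t * z^2 = t + d * ((p:ℚ_[p])^n)^2 := by
    linear_combination (-t) * hz2 + d * ((p:ℚ_[p])^n)^2 * hti
  have hz2' : z^2 ≠ 0 := pow_ne_zero _ hz
  refine ⟨s * (p:ℚ_[p])^n / z, div_ne_zero (mul_ne_zero hs hpn) hz, ?_⟩
  rw [div_pow, eq_div_iff hz2']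
  linear_combination E2 + E1

lemma nat_sq (h3 : ∀ x y z : ℚ_[p], Sq p x → Sq p y → Sq p z → Sq p (x+y+z)) :
    ∀ n : ℕ, Sq p (((n + 3 : ℕ) : ℚ_[p])) := by
  intro n
  induction n using Nat.strong_induction_on with
  | _ n ih =>
    match n, ih with
    | 0, _ =>
      have := h3 1 1 1 one_sq' one_sq' one_sq'
      convert this using 2 <;> norm_num
    | 1, _ => exact ⟨2, two_ne_zero, by norm_num⟩
    | (n+2), ih =>
      have := h3 _ 1 1 (ih n (by omega)) one_sq' one_sq'
      convert this using 2 <;> push_cast <;> ring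
    
lemma not_sq_p3 : ¬ Sq p ((p:ℚ_[p])^3) := by
  rintro ⟨r, hr, hr2⟩
  have hp0 : (p:ℚ_[p]) ≠ 0 := Nat.cast_ne_zero.2 (Fact.out (p := p.Prime)).ne_zero
  have e1 : ((p:ℚ_[p])^3).valuation = 3 := by
    rw [show ((p:ℚ_[p])^3) = p*(p*p) by ring,
      Padic.valuation_mul hp0 (mul_ne_zero hp0 hp0),
      Padic.valuation_mul hp0 hp0, Padic.valuation_p]
    norm_num
  have e2 : (r^2).valuation = 2 * r.valuation := by
    rw [show r^2 = r*r by ring, Padic.valuation_mul hr hr]; ring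
  rw [hr2, e2] at e1
  omega

lemma key {X Y Z : ℚ_[p]} (hX : X ≠ 0) (hY : Y ≠ 0)
    (h : ∀ a b c : ℚ_[p], Sq p a → Sq p b → Sq p c → Sq p (X*a + Y*b + Z*c)) : False := by
  have sX : Sq p X := sq_of_shift hX (fun a ha => by
    have := h a 1 1 ha one_sq' one_sq'
    rwa [show X*a + Y*1 + Z*1 = X*a + (Y+Z) by ring] at this)
  have sY : Sq p Y := sq_of_shift hY (fun b hb => by
    have := h 1 b 1 one_sq' hb one_sq'
    rwa [show X*1 + Y*b + Z*1 = Y*b + (X+Z) by ring] at this)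
  have h3 : ∀ x y z : ℚ_[p], Sq p x → Sq p y → Sq p z → Sq p (x+y+z) := by
    by_cases hZ : Z = 0
    · have h2 : ∀ x y : ℚ_[p], Sq p x → Sq p y → Sq p (x+y) := by
        intro x y hx hy
        have := h (x/X) (y/Y) 1 (sq_div' hx sX) (sq_div' hy sY) one_sq'
        rwa [hZ, mul_div_cancel₀ _ hX, mul_div_cancel₀ _ hY, zero_mul, add_zero] at this
      intro x y z hx hy hz
      exact h2 _ _ (h2 _ _ hx hy) hz
    · have sZ : Sq p Z := sq_of_shift hZ (fun c hc => by
        have := h 1 1 c one_sq' one_sq' hc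
        rwa [show X*1 + Y*1 + Z*c = Z*c + (X+Y) by ring] at this)
      intro x y z hx hy hz
      have := h (x/X) (y/Y) (z/Z) (sq_div' hx sX) (sq_div' hy sY) (sq_div' hz sZ)
      rwa [mul_div_cancel₀ _ hX, mul_div_cancel₀ _ hY, mul_div_cancel₀ _ hZ] at this
  have hp := Fact.out (p := p.Prime)
  have h38 : 3 ≤ p^3 := le_trans (by norm_num) (Nat.pow_le_pow_left hp.two_le 3)
  have hpp : Sq p (((p^3 - 3) + 3 : ℕ) : ℚ_[p]) := nat_sq h3 _
  rw [Nat.sub_add_cancel h38] at hpp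
  apply not_sq_p3 (p := p)
  have : ((p^3 : ℕ) : ℚ_[p]) = (p:ℚ_[p])^3 := by push_cast; ring
  rwa [this] at hpp

theorem stmt_16 (p : ℕ) [Fact p.Prime] :
    {u : ℚ_[p] × ℚ_[p] × ℚ_[p] |
        ∀ a b c : ℚ_[p], (∃ r : ℚ_[p], r ≠ 0 ∧ a = r ^ 2) →
          (∃ r : ℚ_[p], r ≠ 0 ∧ b = r ^ 2) → (∃ r : ℚ_[p], r ≠ 0 ∧ c = r ^ 2) →
          ∃ r : ℚ_[p], r ≠ 0 ∧ u.1 * a + u.2.1 * b + u.2.2 * c = r ^ 2} =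
      {u : ℚ_[p] × ℚ_[p] × ℚ_[p] | ∃ t : ℚ_[p], (∃ r : ℚ_[p], r ≠ 0 ∧ t = r ^ 2) ∧
        (u = (t, 0, 0) ∨ u = (0, t, 0) ∨ u = (0, 0, t))} := by
  ext u
  obtain ⟨U, V, W⟩ := u
  simp only [Set.mem_setOf_eq]
  constructor
  · intro h0
    have h : ∀ a b c : ℚ_[p], Sq p a → Sq p b → Sq p c → Sq p (U*a + V*b + W*c) := by
      intro a b c ha hb hc
      obtain ⟨r, hr, hr2⟩ := h0 a b c ha hb hc
      exact ⟨r, hr, hr2⟩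
    by_cases hU : U = 0 <;> by_cases hV : V = 0 <;> by_cases hW : W = 0
    · exfalso
      obtain ⟨r, hr, e⟩ := h 1 1 1 one_sq' one_sq' one_sq'
      rw [hU, hV, hW] at e
      apply hr
      have : r^2 = 0 := by linear_combination -e
      exact (pow_eq_zero_iff two_ne_zero).mp this
    · -- U=0, V=0, W≠0
      have sW : Sq p W := sq_of_shift (d := U + V) hW (fun c hc => by
        have := h 1 1 c one_sq' one_sq' hc
        rwa [show U*1 + V*1 + W*c = W*c + (U+V) by ring] at this)
      exact ⟨W, sW, Or.inr (Or.inr (by rw [hU, hV]))⟩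
    · -- U=0, V≠0, W=0
      have sV : Sq p V := sq_of_shift (d := U + W) hV (fun b hb => by
        have := h 1 b 1 one_sq' hb one_sq'
        rwa [show U*1 + V*b + W*1 = V*b + (U+W) by ring] at this)
      exact ⟨V, sV, Or.inr (Or.inl (by rw [hU, hW]))⟩
    · -- U=0, V≠0, W≠0
      exfalso
      exact key (Z := U) hV hW (fun a b c ha hb hc => by
          have := h c a b hc ha hb
          rwa [show U*c + V*a + W*b = V*a + W*b + U*c by ring] at this)
    · -- U≠0, V=0, W=0
      have sU : Sq p U := sq_of_shift (d := V + W) hU (fun a ha => by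
        have := h a 1 1 ha one_sq' one_sq'
        rwa [show U*a + V*1 + W*1 = U*a + (V+W) by ring] at this)
      exact ⟨U, sU, Or.inl (by rw [hV, hW])⟩
    · -- U≠0, V=0, W≠0
      exfalso
      exact key (Z := V) hU hW (fun a b c ha hb hc => by
          have := h a c b ha hc hb
          rwa [show U*a + V*c + W*b = U*a + W*b + V*c by ring] at this)
    · exact absurd (key hU hV h) not_false
    · exact absurd (key hU hV h) not_false
  · rintro ⟨t, ⟨r, hr, rfl⟩, (hu|hu|hu)⟩ <;>
      simp only [Prod.mk.injEq] at hu <;> obtain ⟨rfl, rfl, rfl⟩ := hu <;>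
      rintro a b c ⟨x, hx, rfl⟩ ⟨y, hy, rfl⟩ ⟨z, hz, rfl⟩
    · exact ⟨r * x, mul_ne_zero hr hx, by ring⟩
    · exact ⟨r * y, mul_ne_zero hr hy, by ring⟩
    · exact ⟨r * z, mul_ne_zero hr hz, by ring⟩
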